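/- Let (X,d) be a metric space, γ : [0,∞) → X a geodesic ray, r > 0, and S ⊆ [0,∞) Lebesgue measurable with lim_{T→∞} vol(S∩[0,T])/T = M for some M > 0. Let (t_i)_{i∈ℕ} be a strictly increasing sequence of nonnegative reals tending to ∞ such that vol(S∩[t_i, t_{i+1}]) ≤ 2r for all i, and let (y_i)_{i∈ℕ} be points of X with d(y_i, γ(t_i)) ≤ r for all i. Then there exists a nondecreasing sublinear function η₀ : [0,∞) → [0,∞) such that d(y_i, y_{i+1}) ≤ η₀(d(y_0, y_{i+1})) for all i. -/

import Mathlib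

open Filter MeasureTheory

/-- Sublinear monotone envelope construction. -/
lemma envelope_aux {f D : ℕ → ℝ} (hf : ∀ i, 0 ≤ f i) (hD : ∀ i, 0 ≤ D i)
    (h : ∀ ε : ℝ, 0 < ε → ∀ᶠ i in atTop, f i ≤ ε * D i) :
    ∃ η₀ : ℝ → ℝ, MonotoneOn η₀ (Set.Ici 0) ∧ (∀ s : ℝ, 0 ≤ s → 0 ≤ η₀ s) ∧
      Tendsto (fun s : ℝ => η₀ s / s) atTop (nhds 0) ∧ ∀ i : ℕ, f i ≤ η₀ (D i) := by
  set A : ℝ → Set ℝ := fun s => insert 0 (f '' {i | D i ≤ s}) with hA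
  have key : ∀ ε : ℝ, 0 < ε → ∃ C : ℝ, 0 ≤ C ∧
      ∀ s : ℝ, 0 ≤ s → ∀ x ∈ A s, x ≤ C + ε * s := by
    intro ε hε
    obtain ⟨N, hN⟩ := eventually_atTop.1 (h ε hε)
    refine ⟨∑ j ∈ Finset.range N, f j, Finset.sum_nonneg fun j _ => hf j, ?_⟩
    intro s hs x hx
    have hεs : 0 ≤ ε * s := mul_nonneg hε.le hs
    have hsum : 0 ≤ ∑ j ∈ Finset.range N, f j := Finset.sum_nonneg fun j _ => hf j
    rcases hx with rfl | ⟨i, hi, rfl⟩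
    · linarith
    · rcases lt_or_ge i N with hiN | hiN
      · have : f i ≤ ∑ j ∈ Finset.range N, f j :=
          Finset.single_le_sum (fun j _ => hf j) (Finset.mem_range.2 hiN)
        linarith
      · have h1 : f i ≤ ε * D i := hN i hiN
        have h2 : ε * D i ≤ ε * s := mul_le_mul_of_nonneg_left hi hε.le
        have : 0 ≤ ∑ j ∈ Finset.range N, f j := Finset.sum_nonneg fun j _ => hf j
        linarith
  obtain ⟨C₁, hC₁0, hC₁⟩ := key 1 one_pos
  have hne : ∀ s : ℝ, (A s).Nonempty := fun s => ⟨0, Set.mem_insert _ _⟩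
  have hbdd : ∀ s : ℝ, 0 ≤ s → BddAbove (A s) := fun s hs =>
    ⟨C₁ + 1 * s, fun x hx => hC₁ s hs x hx⟩
  refine ⟨fun s => sSup (A s), ?_, ?_, ?_, ?_⟩
  · intro s₁ h₁ s₂ h₂ h12
    exact csSup_le_csSup (hbdd s₂ h₂) (hne s₁)
      (Set.insert_subset_insert (Set.image_mono fun i hi => le_trans hi h12))
  · intro s hs
    exact le_csSup (hbdd s hs) (Set.mem_insert _ _)
  · rw [Metric.tendsto_atTop]
    intro ε hε
    obtain ⟨C, hC0, hC⟩ := key (ε / 2) (by positivity)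
    refine ⟨max 1 (2 * C / ε + 1), fun s hs => ?_⟩
    have hs1 : (1 : ℝ) ≤ s := le_trans (le_max_left _ _) hs
    have hs0 : (0 : ℝ) < s := lt_of_lt_of_le one_pos hs1
    have hsup : sSup (A s) ≤ C + ε / 2 * s := csSup_le (hne s) (hC s hs0.le)
    have hsup0 : 0 ≤ sSup (A s) := le_csSup (hbdd s hs0.le) (Set.mem_insert _ _)
    have hCs : C / s < ε / 2 := by
      rw [div_lt_iff₀ hs0]
      have : 2 * C / ε + 1 ≤ s := le_trans (le_max_right _ _) hs
      have h2C : 2 * C ≤ ε * (s - 1) := by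
        rw [← div_le_iff₀' hε] at *
        linarith
      nlinarith
    have : sSup (A s) / s ≤ C / s + ε / 2 := by
      rw [div_add' _ _ _ hs0.ne', div_le_div_iff_of_pos_right hs0]
      linarith [hsup]
    have habs : |sSup (A s) / s - 0| = sSup (A s) / s := by
      rw [sub_zero, abs_of_nonneg (div_nonneg hsup0 hs0.le)]
    rw [Real.dist_eq, habs]
    linarith
  · intro i
    exact le_csSup (hbdd (D i) (hD i)) (Set.mem_insert_of_mem _ ⟨i, show D i ≤ D i from le_rfl, rfl⟩)

theorem sublinear_consecutive_gaps_of_density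
    {X : Type*} [MetricSpace X] (γ : ℝ → X) (r M : ℝ) (S : Set ℝ)
    (t : ℕ → ℝ) (y : ℕ → X)
    (hγ : ∀ s u : ℝ, 0 ≤ s → 0 ≤ u → dist (γ s) (γ u) = |s - u|)
    (hr : 0 < r)
    (hS_meas : MeasurableSet S) (hS_sub : S ⊆ Set.Ici 0)
    (hM : 0 < M)
    (hdensity : Tendsto (fun T : ℝ => (volume (S ∩ Set.Icc 0 T)).toReal / T)
      atTop (nhds M))
    (ht_mono : StrictMono t) (ht_nonneg : ∀ i, 0 ≤ t i)
    (ht_top : Tendsto t atTop atTop)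
    (hgap : ∀ i : ℕ, (volume (S ∩ Set.Icc (t i) (t (i + 1)))).toReal ≤ 2 * r)
    (hy : ∀ i : ℕ, dist (y i) (γ (t i)) ≤ r) :
    ∃ η₀ : ℝ → ℝ, MonotoneOn η₀ (Set.Ici 0) ∧ (∀ s : ℝ, 0 ≤ s → 0 ≤ η₀ s) ∧
      Tendsto (fun s : ℝ => η₀ s / s) atTop (nhds 0) ∧
      ∀ i : ℕ, dist (y i) (y (i + 1)) ≤ η₀ (dist (y 0) (y (i + 1))) := by
  set V : ℝ → ℝ := fun T => (volume (S ∩ Set.Icc 0 T)).toReal with hV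
  -- subadditivity: V (t (i+1)) ≤ V (t i) + 2r
  have hsub : ∀ i : ℕ, V (t (i + 1)) ≤ V (t i) + 2 * r := by
    intro i
    have hset : S ∩ Set.Icc 0 (t (i + 1)) ⊆
        (S ∩ Set.Icc 0 (t i)) ∪ (S ∩ Set.Icc (t i) (t (i + 1))) := by
      rintro x ⟨hxS, hx0, hx1⟩
      rcases le_total x (t i) with hx | hx
      · exact Or.inl ⟨hxS, hx0, hx⟩
      · exact Or.inr ⟨hxS, hx, hx1⟩
    have hfin : ∀ a b : ℝ, volume (S ∩ Set.Icc a b) ≠ ⊤ := fun a b =>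
      ne_top_of_le_ne_top measure_Icc_lt_top.ne (measure_mono Set.inter_subset_right)
    have h1 : volume (S ∩ Set.Icc 0 (t (i + 1))) ≤
        volume (S ∩ Set.Icc 0 (t i)) + volume (S ∩ Set.Icc (t i) (t (i + 1))) :=
      le_trans (measure_mono hset) (measure_union_le _ _)
    have h2 := ENNReal.toReal_mono
      (by exact ENNReal.add_ne_top.2 ⟨hfin _ _, hfin _ _⟩) h1
    rw [ENNReal.toReal_add (hfin _ _) (hfin _ _)] at h2
    exact le_trans h2 (by have := hgap i; simp only [hV]; linarith)
  -- key eventual estimate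
  have hkey : ∀ ε : ℝ, 0 < ε → ∀ᶠ i in atTop,
      dist (y i) (y (i + 1)) ≤ ε * dist (y 0) (y (i + 1)) := by
    intro ε hε
    set δ : ℝ := ε * M / 4 with hδdef
    have hδ : 0 < δ := by positivity
    obtain ⟨T₀, hT₀⟩ := Metric.tendsto_atTop.1 hdensity δ hδ
    set K : ℝ := 2 * r + 2 * r / M + (ε / 2) * (t 0 + 2 * r) with hKdef
    have hK0 : 0 < K := by
      have h0 := ht_nonneg 0
      rw [hKdef]
      have h1 : 0 < 2 * r / M := by positivity
      have h2 : 0 ≤ (ε / 2) * (t 0 + 2 * r) := by positivity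
      linarith
    set c : ℝ := 2 * K / ε with hcdef
    filter_upwards [ht_top.eventually_ge_atTop (max T₀ 1),
      ht_top.eventually_ge_atTop (t 0 + 2 * r + c)] with i h1 h2
    have hti1 : t i ≤ t (i + 1) := (ht_mono (Nat.lt_succ_self i)).le
    have htipos : (1 : ℝ) ≤ t i := le_trans (le_max_right _ _) h1
    have htiT : T₀ ≤ t i := le_trans (le_max_left _ _) h1
    -- density bounds
    have hb1 : |V (t (i + 1)) / t (i + 1) - M| < δ := by
      have := hT₀ (t (i + 1)) (le_trans htiT hti1)
      rwa [Real.dist_eq] at this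
    have hb2 : |V (t i) / t i - M| < δ := by
      have := hT₀ (t i) htiT
      rwa [Real.dist_eq] at this
    have hti0 : (0 : ℝ) < t i := lt_of_lt_of_le one_pos htipos
    have hti10 : (0 : ℝ) < t (i + 1) := lt_of_lt_of_le hti0 hti1
    have hlow : (M - δ) * t (i + 1) ≤ V (t (i + 1)) := by
      have h := (abs_lt.1 hb1).1
      have : M - δ < V (t (i + 1)) / t (i + 1) := by linarith
      calc (M - δ) * t (i + 1) ≤ (V (t (i + 1)) / t (i + 1)) * t (i + 1) :=
            mul_le_mul_of_nonneg_right this.le hti10.le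
        _ = V (t (i + 1)) := div_mul_cancel₀ _ hti10.ne'
    have hhigh : V (t i) ≤ (M + δ) * t i := by
      have h := (abs_lt.1 hb2).2
      have : V (t i) / t i < M + δ := by linarith
      calc V (t i) = (V (t i) / t i) * t i := (div_mul_cancel₀ _ hti0.ne').symm
        _ ≤ (M + δ) * t i := mul_le_mul_of_nonneg_right this.le hti0.le
    -- gap estimate
    have hgap2 : M * (t (i + 1) - t i) ≤ 2 * δ * t (i + 1) + 2 * r := by
      have h3 := hsub i
      have h4 : δ * t i ≤ δ * t (i + 1) := mul_le_mul_of_nonneg_left hti1 hδ.le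
      nlinarith
    have hgap3 : t (i + 1) - t i ≤ (ε / 2) * t (i + 1) + 2 * r / M := by
      have hrw : M * ((ε / 2) * t (i + 1) + 2 * r / M) = 2 * δ * t (i + 1) + 2 * r := by
        field_simp [hδdef]
        ring
      have := hgap2.trans_eq hrw.symm
      exact le_of_mul_le_mul_left this hM
    -- distance estimates
    have hd1 : dist (y i) (y (i + 1)) ≤ 2 * r + (t (i + 1) - t i) := by
      have h4 := dist_triangle4 (y i) (γ (t i)) (γ (t (i + 1))) (y (i + 1))
      have h5 : dist (γ (t i)) (γ (t (i + 1))) = t (i + 1) - t i := by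
        rw [hγ _ _ (ht_nonneg i) (ht_nonneg (i + 1)), abs_of_nonpos (by linarith)]
        ring
      have h6 : dist (γ (t (i + 1))) (y (i + 1)) ≤ r := by
        rw [dist_comm]; exact hy (i + 1)
      have h7 := hy i
      linarith
    have hd2 : t (i + 1) - t 0 - 2 * r ≤ dist (y 0) (y (i + 1)) := by
      have h4 := dist_triangle4 (γ (t 0)) (y 0) (y (i + 1)) (γ (t (i + 1)))
      have h5 : dist (γ (t 0)) (γ (t (i + 1))) = t (i + 1) - t 0 := by
        rw [hγ _ _ (ht_nonneg 0) (ht_nonneg (i + 1)),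
          abs_of_nonpos (by have := ht_mono.monotone (Nat.zero_le (i+1)); linarith)]
        ring
      have h6 : dist (γ (t 0)) (y 0) ≤ r := by rw [dist_comm]; exact hy 0
      have h7 : dist (y (i + 1)) (γ (t (i + 1))) ≤ r := hy (i + 1)
      linarith
    set D : ℝ := dist (y 0) (y (i + 1)) with hDdef
    have hDc : c ≤ D := by linarith
    have hKD : K ≤ (ε / 2) * D := by
      have : (ε / 2) * c = K := by
        rw [hcdef]; field_simp
      calc K = (ε / 2) * c := this.symm
        _ ≤ (ε / 2) * D := mul_le_mul_of_nonneg_left hDc (by positivity)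
    have hexp : (ε / 2) * t (i + 1) ≤ (ε / 2) * (D + t 0 + 2 * r) :=
      mul_le_mul_of_nonneg_left (by linarith) (by positivity)
    have hring : (ε / 2) * (D + t 0 + 2 * r) = (ε / 2) * D + (ε / 2) * (t 0 + 2 * r) := by
      ring
    have : dist (y i) (y (i + 1)) ≤ (ε / 2) * D + K := by
      rw [hKdef]; linarith
    linarith
  exact envelope_aux (fun i => dist_nonneg) (fun i => dist_nonneg) hkey
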